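/- For every integer g ≥ 2, there exists an injective group homomorphism from the symmetric group S_{2g+2} (i.e., Perm(Fin (2g+2))) into the symplectic group Sp(2g, F₂) of 2g × 2g matrices over the field with two elements preserving the standard symplectic form (Mathlib's Matrix.symplecticGroup (Fin g) (ZMod 2)). -/

import Mathlib

open Matrix Finset

namespace Stmt9

variable (g : ℕ)

abbrev V := Fin (2*g+2) → ZMod 2

/-- indicator vector of the pair `{a,b}` -/
def P2 (a b : ℕ) : V g := fun k => if (k : ℕ) = a ∨ (k : ℕ) = b then 1 else 0

/-- `e_0 + ... + e_{2i+1}` -/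
def X (i : Fin g) : V g := fun k => if (k : ℕ) ≤ 2*(i:ℕ)+1 then 1 else 0

/-- `e_{2i+1} + e_{2i+2}` -/
def Y (i : Fin g) : V g := P2 g (2*(i:ℕ)+1) (2*(i:ℕ)+2)

/-- symplectic basis (modulo the all-ones vector) of the even weight subspace -/
def B : Fin g ⊕ Fin g → V g := Sum.elim (X g) (Y g)

/-- dual family -/
def B' : Fin g ⊕ Fin g → V g := Sum.elim (Y g) (X g)

/-- the matrix of the permutation action in the coordinates given by `B` -/
def Mmat (σ : Equiv.Perm (Fin (2*g+2))) : Matrix (Fin g ⊕ Fin g) (Fin g ⊕ Fin g) (ZMod 2) :=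
  fun r c => (fun k => B g c (σ⁻¹ k)) ⬝ᵥ B' g r

variable {g}

lemma dot_P2 (w : V g) {a b : ℕ} (ha : a < 2*g+2) (hb : b < 2*g+2) (hab : a ≠ b) :
    w ⬝ᵥ P2 g a b = w ⟨a, ha⟩ + w ⟨b, hb⟩ := by
  have : ∀ k : Fin (2*g+2), P2 g a b k =
      (if k = (⟨a, ha⟩ : Fin (2*g+2)) then 1 else 0) +
      (if k = (⟨b, hb⟩ : Fin (2*g+2)) then 1 else 0) := by
    intro k
    simp only [P2, Fin.ext_iff]
    split_ifs with h1 h2 h3 h4 h5 <;> simp_all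
  simp only [dotProduct, this, mul_add, Finset.sum_add_distrib, mul_ite, mul_one, mul_zero]
  rw [Finset.sum_ite_eq', Finset.sum_ite_eq']
  simp

lemma sum_P2 {a b : ℕ} (ha : a < 2*g+2) (hb : b < 2*g+2) (hab : a ≠ b) :
    (∑ k, P2 g a b k) = 0 := by
  have h := dot_P2 (g := g) (fun _ => 1) ha hb hab
  simp only [dotProduct, one_mul] at h; rw [h]; decide

lemma sum_indicator_le (m : ℕ) (hm : m < 2*g+2) :
    (∑ k : Fin (2*g+2), if (k:ℕ) ≤ m then (1 : ZMod 2) else 0) = ((m+1 : ℕ) : ZMod 2) := by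
  rw [Fin.sum_univ_eq_sum_range (fun j => if j ≤ m then (1 : ZMod 2) else 0)]
  rw [Finset.sum_boole]
  have : (Finset.range (2*g+2)).filter (fun j => j ≤ m) = Finset.range (m+1) := by
    ext j; simp; omega
  simp [this]

lemma sum_X (i : Fin g) : (∑ k, X g i k) = 0 := by
  rw [show (∑ k, X g i k) = ∑ k : Fin (2*g+2), if (k:ℕ) ≤ 2*(i:ℕ)+1 then (1 : ZMod 2) else 0 from rfl]
  rw [sum_indicator_le _ (by omega)]
  rw [show 2*(i:ℕ)+1+1 = 2*((i:ℕ)+1) by ring, Nat.cast_mul]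
  rw [show ((2:ℕ) : ZMod 2) = 0 by decide]
  ring

lemma sum_Y (i : Fin g) : (∑ k, Y g i k) = 0 :=
  sum_P2 (by omega) (by omega) (by omega)

lemma sum_B (r : Fin g ⊕ Fin g) : (∑ k, B g r k) = 0 := by
  rcases r with i | i
  · exact sum_X i
  · exact sum_Y i

lemma sum_B' (r : Fin g ⊕ Fin g) : (∑ k, B' g r k) = 0 := by
  rcases r with i | i
  · exact sum_Y i
  · exact sum_X i

lemma dXY (i j : Fin g) : X g i ⬝ᵥ Y g j = if i = j then 1 else 0 := by
  rw [Y, dot_P2 (X g i) (by omega) (by omega) (by omega)]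
  simp only [X, Fin.ext_iff]
  split_ifs <;> first | decide | (exfalso; omega)

lemma dYY (i j : Fin g) : Y g i ⬝ᵥ Y g j = 0 := by
  rw [show Y g j = P2 g (2*(j:ℕ)+1) (2*(j:ℕ)+2) from rfl,
    dot_P2 (Y g i) (by omega) (by omega) (by omega)]
  simp only [Y, P2]
  split_ifs <;> first | decide | (exfalso; omega)

lemma dXX (i j : Fin g) : X g i ⬝ᵥ X g j = 0 := by
  have hpt : ∀ k : Fin (2*g+2), X g i k * X g j k =
      if (k:ℕ) ≤ 2*(min (i:ℕ) (j:ℕ))+1 then (1 : ZMod 2) else 0 := by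
    intro k
    simp only [X]
    split_ifs <;> first | decide | (exfalso; omega)
  rw [dotProduct]
  simp only [hpt]
  rw [sum_indicator_le _ (by have := min_le_left (i:ℕ) (j:ℕ); omega)]
  rw [show 2*(min (i:ℕ) (j:ℕ))+1+1 = 2*((min (i:ℕ) (j:ℕ))+1) by ring, Nat.cast_mul]
  rw [show ((2:ℕ) : ZMod 2) = 0 by decide]
  ring

lemma gram (r s : Fin g ⊕ Fin g) : B g r ⬝ᵥ B' g s = if r = s then 1 else 0 := by
  rcases r with i | i <;> rcases s with j | j
  · simpa [B, B'] using dXY i j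
  · simpa [B, B'] using dXX i j
  · simpa [B, B'] using dYY i j
  · rw [B, B', Sum.elim_inr, Sum.elim_inr, dotProduct_comm]
    simpa [eq_comm] using dXY j i

lemma gramJ (r s : Fin g ⊕ Fin g) : B g r ⬝ᵥ B g s = J (Fin g) (ZMod 2) r s := by
  rcases r with i | i <;> rcases s with j | j <;>
    simp only [B, Sum.elim_inl, Sum.elim_inr, J, fromBlocks_apply₁₁, fromBlocks_apply₁₂,
      fromBlocks_apply₂₁, fromBlocks_apply₂₂, Matrix.zero_apply, Matrix.neg_apply,
      Matrix.one_apply]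
  · exact dXX i j
  · rw [dXY i j]; split_ifs <;> decide
  · rw [dotProduct_comm, dXY j i]; simp [eq_comm]
  · exact dYY i j

/-- bilinear expansion of a dot product of a linear combination plus a constant -/
lemma dot_comb {ι : Type} [Fintype ι] (F : ι → V g) (a : ι → ZMod 2) (d : ZMod 2) (w : V g) :
    (fun k => (∑ s, a s * F s k) + d) ⬝ᵥ w = (∑ s, a s * (F s ⬝ᵥ w)) + d * (∑ k, w k) := by
  simp only [dotProduct, add_mul, Finset.sum_add_distrib, Finset.sum_mul, Finset.mul_sum,
    mul_assoc]
  rw [Finset.sum_comm]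

lemma add_self_two (x : ZMod 2) : x + x = 0 := by
  have := ZMod.natCast_self 2
  fin_cases x <;> decide

lemma eq_of_add_eq_zero_two {x y : ZMod 2} (h : x + y = 0) : x = y := by
  fin_cases x <;> fin_cases y <;> first | rfl | (exfalso; revert h; decide)

/-- Every even-weight vector is, up to a constant vector, the linear combination of the `B r`
with coefficients the dot products against the dual family `B'`. -/
lemma recon (hg : 2 ≤ g) (v : V g) (hv : (∑ k, v k) = 0) :
    ∃ c : ZMod 2, ∀ k, v k = (∑ r, (v ⬝ᵥ B' g r) * B g r k) + c := by
  set a : Fin g ⊕ Fin g → ZMod 2 := fun r => v ⬝ᵥ B' g r with ha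
  set w : V g := fun k => v k + ∑ r, a r * B g r k with hwdef
  have hwd : ∀ s, w ⬝ᵥ B' g s = 0 := by
    intro s
    have e1 : w ⬝ᵥ B' g s = v ⬝ᵥ B' g s + ∑ r, a r * (B g r ⬝ᵥ B' g s) := by
      simp only [hwdef, dotProduct, add_mul, Finset.sum_add_distrib, Finset.sum_mul,
        Finset.mul_sum, mul_assoc]
      rw [Finset.sum_comm]
    rw [e1]
    simp only [gram, mul_ite, mul_one, mul_zero, Finset.sum_ite_eq', Finset.mem_univ, if_true]
    exact add_self_two _
  have hsum : (∑ k, w k) = 0 := by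
    simp only [hwdef, Finset.sum_add_distrib, hv, zero_add]
    rw [Finset.sum_comm]
    simp only [← Finset.mul_sum, sum_B, mul_zero, Finset.sum_const_zero]
  have hwdX : ∀ i : Fin g, w ⬝ᵥ X g i = 0 := fun i => hwd (Sum.inr i)
  have hwdY : ∀ i : Fin g, w ⬝ᵥ Y g i = 0 := fun i => hwd (Sum.inl i)
  have hadj : ∀ (m : ℕ) (hm1 : m + 1 < 2*g+2), w ⟨m, by omega⟩ = w ⟨m+1, hm1⟩ := by
    intro m hm1
    apply eq_of_add_eq_zero_two
    have hdp := dot_P2 w (a := m) (b := m+1) (by omega) hm1 (by omega)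
    rw [← hdp]
    rcases Nat.even_or_odd m with ⟨t, ht⟩ | ⟨t, ht⟩
    · subst ht
      rcases Nat.eq_zero_or_pos t with rfl | hT
      · have hx : P2 g (0+0) (0+0+1) = X g ⟨0, by omega⟩ := by
          funext k; simp only [P2, X]; exact if_congr (by omega) rfl rfl
        rw [hx]; exact hwdX ⟨0, by omega⟩
      · rcases eq_or_lt_of_le (show t ≤ g by omega) with heq | hlt
        · have hx : ∀ k : Fin (2*g+2), P2 g (t+t) (t+t+1) k = 1 + X g ⟨g-1, by omega⟩ k := by
            intro k; simp only [P2, X]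
            split_ifs <;> first | decide | (exfalso; omega)
          have e2 : w ⬝ᵥ P2 g (t+t) (t+t+1) = (∑ k, w k) + w ⬝ᵥ X g ⟨g-1, by omega⟩ := by
            simp only [dotProduct, hx, mul_add, mul_one, Finset.sum_add_distrib]
          rw [e2, hsum, zero_add]; exact hwdX ⟨g-1, by omega⟩
        · have hx : ∀ k : Fin (2*g+2), P2 g (t+t) (t+t+1) k
              = X g ⟨t, hlt⟩ k + X g ⟨t-1, by omega⟩ k := by
            intro k; simp only [P2, X]
            split_ifs <;> first | decide | (exfalso; omega)
          have e2 : w ⬝ᵥ P2 g (t+t) (t+t+1)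
              = w ⬝ᵥ X g ⟨t, hlt⟩ + w ⬝ᵥ X g ⟨t-1, by omega⟩ := by
            simp only [dotProduct, hx, mul_add, Finset.sum_add_distrib]
          rw [e2, hwdX ⟨t, hlt⟩, hwdX ⟨t-1, by omega⟩, add_zero]
    · subst ht
      have htg : t < g := by omega
      exact hwdY ⟨t, htg⟩
  have hconst : ∀ k : Fin (2*g+2), w k = w ⟨0, by omega⟩ := by
    suffices h : ∀ (m : ℕ) (hm : m < 2*g+2), w ⟨m, hm⟩ = w ⟨0, by omega⟩ by
      intro k; exact h k.1 k.2
    intro m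
    induction m with
    | zero => intro hm; rfl
    | succ p ih => intro hm; rw [← hadj p hm]; exact ih (by omega)
  refine ⟨w ⟨0, by omega⟩, fun k => ?_⟩
  have h1 : v k + (∑ r, a r * B g r k) = w ⟨0, by omega⟩ := by rw [← hconst k]
  have h2 := add_self_two (∑ r, a r * B g r k)
  linear_combination h1 - h2

lemma sum_comp_perm (σ : Equiv.Perm (Fin (2*g+2))) (v : V g) :
    (∑ k, v (σ⁻¹ k)) = ∑ k, v k := Equiv.sum_comp σ⁻¹ v

lemma hcol (hg : 2 ≤ g) (σ : Equiv.Perm (Fin (2*g+2))) (c : Fin g ⊕ Fin g) :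
    ∃ d, ∀ k, B g c (σ⁻¹ k) = (∑ r, Mmat g σ r c * B g r k) + d := by
  have h := recon hg (fun k => B g c (σ⁻¹ k)) (by rw [sum_comp_perm]; exact sum_B c)
  exact h

lemma Mone : Mmat g 1 = 1 := by
  ext r c
  show (fun k => B g c ((1 : Equiv.Perm (Fin (2*g+2)))⁻¹ k)) ⬝ᵥ B' g r = _
  simp only [inv_one, Equiv.Perm.one_apply]
  rw [show (fun k => B g c k) = B g c from rfl, gram, Matrix.one_apply]
  simp [eq_comm]

lemma Mmul (hg : 2 ≤ g) (σ τ : Equiv.Perm (Fin (2*g+2))) :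
    Mmat g (σ * τ) = Mmat g σ * Mmat g τ := by
  ext r c
  obtain ⟨d, hd⟩ := hcol hg τ c
  have key : (fun k => B g c ((σ*τ)⁻¹ k)) = fun k => (∑ s, Mmat g τ s c * B g s (σ⁻¹ k)) + d := by
    funext k
    rw [show (σ*τ)⁻¹ k = τ⁻¹ (σ⁻¹ k) by rw [_root_.mul_inv_rev]; rfl]
    exact hd _
  show (fun k => B g c ((σ*τ)⁻¹ k)) ⬝ᵥ B' g r = _
  rw [key]
  have h2 : (fun k => (∑ s, Mmat g τ s c * B g s (σ⁻¹ k)) + d) ⬝ᵥ B' g r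
      = (∑ s, Mmat g τ s c * ((fun k => B g s (σ⁻¹ k)) ⬝ᵥ B' g r)) + d * (∑ k, B' g r k) :=
    dot_comb _ _ _ _
  rw [h2, sum_B', mul_zero, add_zero, Matrix.mul_apply]
  refine Finset.sum_congr rfl (fun s _ => ?_)
  rw [mul_comm (Mmat g τ s c)]
  rfl

lemma Msympl (hg : 2 ≤ g) (σ : Equiv.Perm (Fin (2*g+2))) :
    Mmat g σ ∈ Matrix.symplecticGroup (Fin g) (ZMod 2) := by
  rw [SymplecticGroup.mem_iff']
  have key : ∀ r c, J (Fin g) (ZMod 2) r c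
      = ∑ s, ∑ t, Mmat g σ s r * J (Fin g) (ZMod 2) s t * Mmat g σ t c := by
    intro r c
    obtain ⟨d, hdr⟩ := hcol hg σ r
    obtain ⟨e, hdc⟩ := hcol hg σ c
    have hinv : (fun k => B g r (σ⁻¹ k)) ⬝ᵥ (fun k => B g c (σ⁻¹ k)) = B g r ⬝ᵥ B g c :=
      Equiv.sum_comp σ⁻¹ (fun m => B g r m * B g c m)
    rw [← gramJ, ← hinv]
    rw [show (fun k => B g r (σ⁻¹ k)) = fun k => (∑ s, Mmat g σ s r * B g s k) + d from
      funext hdr]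
    rw [dot_comb (B g) (fun s => Mmat g σ s r) d _]
    have hsum2 : (∑ k, B g c (σ⁻¹ k)) = 0 := by rw [sum_comp_perm]; exact sum_B c
    rw [hsum2, mul_zero, add_zero]
    refine Finset.sum_congr rfl (fun s _ => ?_)
    rw [dotProduct_comm]
    rw [show (fun k => B g c (σ⁻¹ k)) = fun k => (∑ t, Mmat g σ t c * B g t k) + e from
      funext hdc]
    rw [dot_comb (B g) (fun t => Mmat g σ t c) e (B g s)]
    rw [sum_B, mul_zero, add_zero, Finset.mul_sum]
    refine Finset.sum_congr rfl (fun t _ => ?_)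
    rw [dotProduct_comm (B g t) (B g s), gramJ]
    ring
  ext r c
  rw [key r c, Finset.sum_comm, Matrix.mul_apply]
  refine Finset.sum_congr rfl (fun t _ => ?_)
  rw [Matrix.mul_apply, Finset.sum_mul]
  exact Finset.sum_congr rfl (fun s _ => by rw [Matrix.transpose_apply])

lemma exists_not_mem (hg : 2 ≤ g) (s : Finset (Fin (2*g+2))) (hs : s.card ≤ 4) :
    ∃ m, m ∉ s := by
  by_contra h
  push_neg at h
  have hsub : (Finset.univ : Finset (Fin (2*g+2))) ⊆ s := fun x _ => h x
  have hc := Finset.card_le_card hsub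
  rw [Finset.card_univ, Fintype.card_fin] at hc
  omega

lemma ker_pointwise (hg : 2 ≤ g) {σ : Equiv.Perm (Fin (2*g+2))} (hσ : Mmat g σ = 1)
    (v : V g) (hv : (∑ k, v k) = 0) : ∃ d, ∀ k, v (σ⁻¹ k) = v k + d := by
  obtain ⟨c, hc⟩ := recon hg v hv
  obtain ⟨c', hc'⟩ := recon hg (fun k => v (σ⁻¹ k)) (by rw [sum_comp_perm]; exact hv)
  have hcoef : ∀ r, (fun k => v (σ⁻¹ k)) ⬝ᵥ B' g r = v ⬝ᵥ B' g r := by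
    intro r
    have e1 : (fun k => v (σ⁻¹ k)) = fun k => (∑ s, (v ⬝ᵥ B' g s) * B g s (σ⁻¹ k)) + c := by
      funext k; exact hc _
    rw [e1]
    have h2 : (fun k => (∑ s, (v ⬝ᵥ B' g s) * B g s (σ⁻¹ k)) + c) ⬝ᵥ B' g r
        = (∑ s, (v ⬝ᵥ B' g s) * ((fun k => B g s (σ⁻¹ k)) ⬝ᵥ B' g r)) + c * (∑ k, B' g r k) :=
      dot_comb _ _ _ _
    rw [h2, sum_B', mul_zero, add_zero]
    have h3 : ∀ s, ((fun k => B g s (σ⁻¹ k)) ⬝ᵥ B' g r)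
        = (1 : Matrix (Fin g ⊕ Fin g) (Fin g ⊕ Fin g) (ZMod 2)) r s := by
      intro s; rw [← hσ]; rfl
    simp only [h3, Matrix.one_apply, mul_ite, mul_one, mul_zero]
    rw [Finset.sum_ite_eq]
    simp
  refine ⟨c' + c, fun k => ?_⟩
  have h4 := hc' k
  simp only [hcoef] at h4
  have h5 := hc k
  have h6 := add_self_two c
  linear_combination h4 - h5 - h6

lemma pair_swap (hg : 2 ≤ g) {σ : Equiv.Perm (Fin (2*g+2))} (hσ : Mmat g σ = 1)
    {a b : Fin (2*g+2)} (hab : a ≠ b) (k : Fin (2*g+2)) :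
    σ⁻¹ k = a ∨ σ⁻¹ k = b ↔ k = a ∨ k = b := by
  set v := P2 g a.1 b.1 with hvdef
  have hv : (∑ k, v k) = 0 := sum_P2 a.2 b.2 (fun h => hab (Fin.ext h))
  obtain ⟨d, hd⟩ := ker_pointwise hg hσ v hv
  have hval : ∀ m : Fin (2*g+2), v m = if m = a ∨ m = b then 1 else 0 := by
    intro m
    exact if_congr (by rw [Fin.ext_iff, Fin.ext_iff]) rfl rfl
  have hd0 : d = 0 := by
    have hcard : ({a, b, σ a, σ b} : Finset (Fin (2*g+2))).card ≤ 4 := by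
      have c1 := Finset.card_insert_le a ({b, σ a, σ b} : Finset (Fin (2*g+2)))
      have c2 := Finset.card_insert_le b ({σ a, σ b} : Finset (Fin (2*g+2)))
      have c3 := Finset.card_insert_le (σ a) ({σ b} : Finset (Fin (2*g+2)))
      have c4 : ({σ b} : Finset (Fin (2*g+2))).card = 1 := Finset.card_singleton _
      omega
    obtain ⟨m, hm⟩ := exists_not_mem hg _ hcard
    simp only [Finset.mem_insert, Finset.mem_singleton, not_or] at hm
    obtain ⟨h1, h2, h3, h4⟩ := hm
    have h5 := hd m
    have hma : ¬(σ⁻¹ m = a ∨ σ⁻¹ m = b) := by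
      rintro (h | h)
      · exact h3 (by rw [← h]; exact (σ.apply_symm_apply m).symm)
      · exact h4 (by rw [← h]; exact (σ.apply_symm_apply m).symm)
    have hmb : ¬(m = a ∨ m = b) := by tauto
    rw [hval, hval, if_neg hma, if_neg hmb, zero_add] at h5
    exact h5.symm
  have h6 := hd k
  rw [hval, hval, hd0, add_zero] at h6
  constructor <;> intro h <;> by_contra hcon
  · rw [if_pos h, if_neg hcon] at h6; exact one_ne_zero h6
  · rw [if_neg hcon, if_pos h] at h6; exact one_ne_zero h6.symm

lemma perm_eq_one (hg : 2 ≤ g) {σ : Equiv.Perm (Fin (2*g+2))} (hσ : Mmat g σ = 1) :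
    σ = 1 := by
  have hfix : ∀ i, σ⁻¹ i = i := by
    intro i
    by_contra hi
    have key : ∀ b : Fin (2*g+2), b ≠ i → b ≠ σ⁻¹ i → σ⁻¹ i = b := by
      intro b hbi hbsi
      have h := (pair_swap hg hσ (Ne.symm hbi) i).mpr (Or.inl rfl)
      rcases h with h | h
      · exact absurd h hi
      · exact h
    obtain ⟨b1, hb1⟩ := exists_not_mem hg ({i, σ⁻¹ i} : Finset (Fin (2*g+2)))
      (le_trans (Finset.card_insert_le _ _) (by simp))
    obtain ⟨b2, hb2⟩ := exists_not_mem hg ({i, σ⁻¹ i, b1} : Finset (Fin (2*g+2)))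
      (by
        have c1 := Finset.card_insert_le i ({σ⁻¹ i, b1} : Finset (Fin (2*g+2)))
        have c2 := Finset.card_insert_le (σ⁻¹ i) ({b1} : Finset (Fin (2*g+2)))
        have c3 : ({b1} : Finset (Fin (2*g+2))).card = 1 := Finset.card_singleton _
        omega)
    simp only [Finset.mem_insert, Finset.mem_singleton, not_or] at hb1 hb2
    have e1 := key b1 hb1.1 hb1.2
    have e2 := key b2 hb2.1 hb2.2.1
    exact hb2.2.2 (by rw [← e1, ← e2])
  have : σ⁻¹ = 1 := Equiv.ext hfix
  exact inv_eq_one.mp this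

end Stmt9

/-- Permuting the `2g+2` branch points of a hyperelliptic curve of genus `g ≥ 2` gives an
embedding of the symmetric group `S_{2g+2}` into the symplectic group `Sp(2g, F₂)`. -/
theorem stmt9 (g : ℕ) (hg : 2 ≤ g) :
    ∃ f : Equiv.Perm (Fin (2 * g + 2)) →* Matrix.symplecticGroup (Fin g) (ZMod 2),
      Function.Injective f := by
  refine ⟨{ toFun := fun σ => ⟨Stmt9.Mmat g σ, Stmt9.Msympl hg σ⟩,
            map_one' := Subtype.ext Stmt9.Mone,
            map_mul' := fun σ τ => Subtype.ext (Stmt9.Mmul hg σ τ) }, ?_⟩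
  rw [injective_iff_map_eq_one]
  intro σ hσ1
  have hσ : Stmt9.Mmat g σ = 1 := congrArg Subtype.val hσ1
  exact Stmt9.perm_eq_one hg hσ
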